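/- arXiv:1005.0451 — 2 statements merged into one kernel-verified Lean document; each statement's English description precedes it below -/
import Mathlib

section
/- Let f : I ⊆ ℝ → ℝ be a differentiable mapping on the interior I° of I, with a, b ∈ I, a < b, and f' Lebesgue integrable on [a,b]. If |f'| is convex on [a,b], then |(1/(b−a)) ∫_a^b f(x) dx − f((a+b)/2)| ≤ ((b−a)/4) · (|f'(a)| + |f'(b)|)/2. -/
open MeasureTheory

lemma hh_quad_integral (p q r c d : ℝ) :
    ∫ x in c..d, (p * x ^ 2 + q * x + r) =
      p * (d ^ 3 - c ^ 3) / 3 + q * (d ^ 2 - c ^ 2) / 2 + r * (d - c) := by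
  have h : ∀ x ∈ Set.uIcc c d,
      HasDerivAt (fun x : ℝ => p * x ^ 3 / 3 + q * x ^ 2 / 2 + r * x)
        (p * x ^ 2 + q * x + r) x := by
    intro x _
    have h1 : HasDerivAt (fun x : ℝ => p * x ^ 3 / 3 + q * x ^ 2 / 2 + r * x)
        (p * ((3 : ℕ) * x ^ 2) / 3 + q * ((2 : ℕ) * x ^ 1) / 2 + r * 1) x := by
      exact ((((hasDerivAt_pow 3 x).const_mul p).div_const 3).add
        (((hasDerivAt_pow 2 x).const_mul q).div_const 2)).add ((hasDerivAt_id x).const_mul r)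
    convert h1 using 1
    push_cast
    ring
  rw [intervalIntegral.integral_eq_sub_of_hasDerivAt h
    ((Continuous.intervalIntegrable (by continuity) c d))]
  ring

theorem hermite_hadamard_first_deriv_abs_convex
    (I : Set ℝ) (hI : I.OrdConnected) (f f' : ℝ → ℝ) (a b : ℝ)
    (ha : a ∈ I) (hb : b ∈ I) (hab : a < b)
    (hderiv : ∀ x ∈ interior I, HasDerivAt f (f' x) x)
    (hint : IntervalIntegrable f' volume a b)
    (hconv : ConvexOn ℝ (Set.Icc a b) (fun x => |f' x|)) :
    |(1 / (b - a)) * (∫ x in a..b, f x) - f ((a + b) / 2)| ≤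
      (b - a) / 4 * ((|f' a| + |f' b|) / 2) := by
  have hba : (0 : ℝ) < b - a := by linarith
  set m : ℝ := (a + b) / 2 with hm_def
  have ham : a < m := by rw [hm_def]; linarith
  have hmb : m < b := by rw [hm_def]; linarith
  have hIcc : Set.Icc a b ⊆ I := hI.out ha hb
  have hIoo : Set.Ioo a b ⊆ interior I :=
    interior_maximal (Set.Ioo_subset_Icc_self.trans hIcc) isOpen_Ioo
  have hmIoo : m ∈ Set.Ioo a b := ⟨ham, hmb⟩
  set A : ℝ := |f' a| with hA_def
  set B : ℝ := |f' b| with hB_def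
  set F : ℝ → ℝ := fun x => f m + ∫ t in m..x, f' t with hF_def
  have hFm : F m = f m := by simp [hF_def]
  -- f = F on Ioo a b
  have hfF : ∀ x ∈ Set.Ioo a b, f x = F x := by
    intro x hx
    have hsub : Set.uIcc m x ⊆ Set.Ioo a b :=
      (Set.ordConnected_Ioo).uIcc_subset hmIoo hx
    have hsub2 : Set.uIcc m x ⊆ Set.uIcc a b := by
      rw [Set.uIcc_of_le hab.le]
      exact hsub.trans Set.Ioo_subset_Icc_self
    have h1 : ∫ t in m..x, f' t = f x - f m :=
      intervalIntegral.integral_eq_sub_of_hasDerivAt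
        (fun t ht => hderiv t (hIoo (hsub ht))) (hint.mono_set hsub2)
    simp only [hF_def, h1]; ring
  have hFderiv : ∀ x ∈ Set.Ioo a b, HasDerivAt F (f' x) x := by
    intro x hx
    exact (hderiv x (hIoo hx)).congr_of_eventuallyEq
      (Filter.eventuallyEq_of_mem (isOpen_Ioo.mem_nhds hx) fun y hy => (hfF y hy).symm)
  have hFcontu : ContinuousOn F (Set.uIcc a b) :=
    continuousOn_const.add (intervalIntegral.continuousOn_primitive_interval' hint
      (by rw [Set.uIcc_of_le hab.le]; exact ⟨ham.le, hmb.le⟩))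
  have hFcont : ContinuousOn F (Set.Icc a b) := by
    rwa [Set.uIcc_of_le hab.le] at hFcontu
  have hFint : IntervalIntegrable F volume a b := hFcontu.intervalIntegrable
  -- restricted integrabilities
  have hsub_am : Set.uIcc a m ⊆ Set.uIcc a b :=
    Set.uIcc_subset_uIcc Set.left_mem_uIcc
      (by rw [Set.uIcc_of_le hab.le]; exact ⟨ham.le, hmb.le⟩)
  have hsub_mb : Set.uIcc m b ⊆ Set.uIcc a b :=
    Set.uIcc_subset_uIcc (by rw [Set.uIcc_of_le hab.le]; exact ⟨ham.le, hmb.le⟩)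
      Set.right_mem_uIcc
  have hint_am : IntervalIntegrable f' volume a m := hint.mono_set hsub_am
  have hint_mb : IntervalIntegrable f' volume m b := hint.mono_set hsub_mb
  have hFint_am : IntervalIntegrable F volume a m := hFint.mono_set hsub_am
  have hFint_mb : IntervalIntegrable F volume m b := hFint.mono_set hsub_mb
  have hw1cont : ContinuousOn (fun x : ℝ => x - a) (Set.uIcc a m) :=
    (continuous_id.sub continuous_const).continuousOn
  have hw2cont : ContinuousOn (fun x : ℝ => x - b) (Set.uIcc m b) :=
    (continuous_id.sub continuous_const).continuousOn
  have hwf1 : IntervalIntegrable (fun x => (x - a) * f' x) volume a m :=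
    hint_am.continuousOn_mul hw1cont
  have hwf2 : IntervalIntegrable (fun x => (x - b) * f' x) volume m b :=
    hint_mb.continuousOn_mul hw2cont
  -- ∫ f = ∫ F
  have hIeq : ∫ x in a..b, f x = ∫ x in a..b, F x := by
    apply intervalIntegral.integral_congr_ae
    have hne : ∀ᵐ x : ℝ, x ≠ b := by
      rw [MeasureTheory.ae_iff]
      simp [measure_singleton (μ := (volume : Measure ℝ)) b]
    filter_upwards [hne] with x hxb hx
    have hx' : x ∈ Set.Ioo a b := by
      rw [Set.uIoc_of_le hab.le] at hx
      exact ⟨hx.1, lt_of_le_of_ne hx.2 hxb⟩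
    exact hfF x hx'
  -- integration by parts on [a, m]
  have h1 : ∫ x in a..m, (F x + (x - a) * f' x) = (m - a) * F m := by
    have hd : ∀ x ∈ Set.Ioo a m, HasDerivAt (fun x => (x - a) * F x)
        (F x + (x - a) * f' x) x := by
      intro x hx
      have hx' : x ∈ Set.Ioo a b := ⟨hx.1, hx.2.trans hmb⟩
      have := ((hasDerivAt_id x).sub_const a).mul (hFderiv x hx')
      refine this.congr_deriv ?_
      try simp only [id_eq]
      ring
    have hc : ContinuousOn (fun x => (x - a) * F x) (Set.Icc a m) :=
      ((continuous_id.sub continuous_const).continuousOn).mul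
        (hFcont.mono (Set.Icc_subset_Icc le_rfl hmb.le))
    have hi : IntervalIntegrable (fun x => F x + (x - a) * f' x) volume a m :=
      hFint_am.add hwf1
    have := intervalIntegral.integral_eq_sub_of_hasDerivAt_of_le ham.le hc hd hi
    rw [this]; ring
  have hI1 : ∫ x in a..m, (x - a) * f' x = (m - a) * F m - ∫ x in a..m, F x := by
    rw [intervalIntegral.integral_add hFint_am hwf1] at h1
    linarith
  -- integration by parts on [m, b]
  have h2 : ∫ x in m..b, (F x + (x - b) * f' x) = (b - m) * F m := by
    have hd : ∀ x ∈ Set.Ioo m b, HasDerivAt (fun x => (x - b) * F x)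
        (F x + (x - b) * f' x) x := by
      intro x hx
      have hx' : x ∈ Set.Ioo a b := ⟨ham.trans hx.1, hx.2⟩
      have := ((hasDerivAt_id x).sub_const b).mul (hFderiv x hx')
      refine this.congr_deriv ?_
      try simp only [id_eq]
      ring
    have hc : ContinuousOn (fun x => (x - b) * F x) (Set.Icc m b) :=
      ((continuous_id.sub continuous_const).continuousOn).mul
        (hFcont.mono (Set.Icc_subset_Icc ham.le le_rfl))
    have hi : IntervalIntegrable (fun x => F x + (x - b) * f' x) volume m b :=
      hFint_mb.add hwf2
    have := intervalIntegral.integral_eq_sub_of_hasDerivAt_of_le hmb.le hc hd hi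
    rw [this]; ring
  have hI2 : ∫ x in m..b, (x - b) * f' x = (b - m) * F m - ∫ x in m..b, F x := by
    rw [intervalIntegral.integral_add hFint_mb hwf2] at h2
    linarith
  have hsplit : ∫ x in a..b, F x = (∫ x in a..m, F x) + ∫ x in m..b, F x :=
    (intervalIntegral.integral_add_adjacent_intervals hFint_am hFint_mb).symm
  have hkey : (b - a) * F m - ∫ x in a..b, F x =
      (∫ x in a..m, (x - a) * f' x) + ∫ x in m..b, (x - b) * f' x := by
    rw [hsplit, hI1, hI2]; ring
  -- convexity bound
  have hgbound : ∀ x ∈ Set.Icc a b, |f' x| ≤ ((b - x) * A + (x - a) * B) / (b - a) := by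
    intro x hx
    have ht0 : 0 ≤ (b - x) / (b - a) := div_nonneg (by linarith [hx.2]) hba.le
    have ht1 : 0 ≤ (x - a) / (b - a) := div_nonneg (by linarith [hx.1]) hba.le
    have hsum : (b - x) / (b - a) + (x - a) / (b - a) = 1 := by
      field_simp; ring
    have hcx := hconv.2 (Set.left_mem_Icc.2 hab.le) (Set.right_mem_Icc.2 hab.le) ht0 ht1 hsum
    simp only [smul_eq_mul] at hcx
    have hxe : (b - x) / (b - a) * a + (x - a) / (b - a) * b = x := by
      field_simp; ring
    rw [hxe] at hcx
    calc |f' x| ≤ (b - x) / (b - a) * A + (x - a) / (b - a) * B := hcx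
      _ = ((b - x) * A + (x - a) * B) / (b - a) := by ring
  set g : ℝ → ℝ := fun x => ((b - x) * A + (x - a) * B) / (b - a) with hg_def
  have hgcont : Continuous g :=
    (((continuous_const.sub continuous_id).mul continuous_const).add
      ((continuous_id.sub continuous_const).mul continuous_const)).div_const _
  -- bound |∫ (x-a) f'| on [a,m]
  have hK1 : |∫ x in a..m, (x - a) * f' x| ≤ ∫ x in a..m, (x - a) * g x := by
    calc |∫ x in a..m, (x - a) * f' x| ≤ ∫ x in a..m, |(x - a) * f' x| :=
          intervalIntegral.abs_integral_le_integral_abs ham.le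
      _ ≤ ∫ x in a..m, (x - a) * g x := by
          apply intervalIntegral.integral_mono_on ham.le hwf1.abs
            ((hgcont.intervalIntegrable a m).continuousOn_mul hw1cont)
          intro x hx
          have hx' : x ∈ Set.Icc a b := ⟨hx.1, hx.2.trans hmb.le⟩
          rw [abs_mul, abs_of_nonneg (by linarith [hx.1] : (0:ℝ) ≤ x - a)]
          exact mul_le_mul_of_nonneg_left (hgbound x hx') (by linarith [hx.1])
  have hK2 : |∫ x in m..b, (x - b) * f' x| ≤ ∫ x in m..b, (b - x) * g x := by
    calc |∫ x in m..b, (x - b) * f' x| ≤ ∫ x in m..b, |(x - b) * f' x| :=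
          intervalIntegral.abs_integral_le_integral_abs hmb.le
      _ ≤ ∫ x in m..b, (b - x) * g x := by
          apply intervalIntegral.integral_mono_on hmb.le hwf2.abs
            (((hgcont.intervalIntegrable m b).continuousOn_mul
              ((continuous_const.sub continuous_id).continuousOn)))
          intro x hx
          have hx' : x ∈ Set.Icc a b := ⟨ham.le.trans hx.1, hx.2⟩
          rw [abs_mul, abs_sub_comm, abs_of_nonneg (by linarith [hx.2] : (0:ℝ) ≤ b - x)]
          exact mul_le_mul_of_nonneg_left (hgbound x hx') (by linarith [hx.2])
  -- compute the polynomial integrals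
  have hC1 : ∫ x in a..m, (x - a) * g x =
      ((B - A) / (b - a)) * (m ^ 3 - a ^ 3) / 3 +
      ((A * (a + b) - 2 * a * B) / (b - a)) * (m ^ 2 - a ^ 2) / 2 +
      ((B * a ^ 2 - A * a * b) / (b - a)) * (m - a) := by
    rw [intervalIntegral.integral_congr (g := fun x =>
      ((B - A) / (b - a)) * x ^ 2 + ((A * (a + b) - 2 * a * B) / (b - a)) * x +
        (B * a ^ 2 - A * a * b) / (b - a)) ?_]
    · exact hh_quad_integral _ _ _ _ _
    · intro x _
      simp only [hg_def]
      field_simp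
      ring
  have hC2 : ∫ x in m..b, (b - x) * g x =
      ((A - B) / (b - a)) * (b ^ 3 - m ^ 3) / 3 +
      ((B * (a + b) - 2 * b * A) / (b - a)) * (b ^ 2 - m ^ 2) / 2 +
      ((A * b ^ 2 - B * a * b) / (b - a)) * (b - m) := by
    rw [intervalIntegral.integral_congr (g := fun x =>
      ((A - B) / (b - a)) * x ^ 2 + ((B * (a + b) - 2 * b * A) / (b - a)) * x +
        (A * b ^ 2 - B * a * b) / (b - a)) ?_]
    · exact hh_quad_integral _ _ _ _ _
    · intro x _
      simp only [hg_def]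
      field_simp
      ring
  have hCsum : (∫ x in a..m, (x - a) * g x) + ∫ x in m..b, (b - x) * g x =
      (b - a) ^ 2 * (A + B) / 8 := by
    rw [hC1, hC2, hm_def]
    field_simp
    ring
  -- assemble
  have hstep : (1 / (b - a)) * (∫ x in a..b, f x) - f m =
      (1 / (b - a)) * ((∫ x in a..b, F x) - (b - a) * F m) := by
    rw [hIeq, hFm]
    field_simp
  rw [hstep, abs_mul, abs_of_nonneg (by positivity : (0:ℝ) ≤ 1 / (b - a)), abs_sub_comm]
  rw [hkey]
  calc (1 / (b - a)) * |(∫ x in a..m, (x - a) * f' x) + ∫ x in m..b, (x - b) * f' x|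
      ≤ (1 / (b - a)) * ((∫ x in a..m, (x - a) * g x) + ∫ x in m..b, (b - x) * g x) := by
        apply mul_le_mul_of_nonneg_left _ (by positivity)
        calc |(∫ x in a..m, (x - a) * f' x) + ∫ x in m..b, (x - b) * f' x|
            ≤ |∫ x in a..m, (x - a) * f' x| + |∫ x in m..b, (x - b) * f' x| := abs_add_le _ _
          _ ≤ _ := add_le_add hK1 hK2
    _ = (b - a) / 4 * ((A + B) / 2) := by
        rw [hCsum]
        field_simp
        ring
end

section
/- Let f : I ⊆ ℝ → ℝ be a differentiable mapping on the interior I° of I, with a, b ∈ I°, a < b, and f' Lebesgue integrable on [a,b]. Let q ≥ 1. If |f'|^q is convex on [a,b], then |(1/(b−a)) ∫_a^b f(x) dx − f((a+b)/2)| ≤ ((b−a)/4) · [(|f'(a)|^q + |f'(b)|^q)/2]^{1/q}. -/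
open MeasureTheory

lemma two_point_power_mean_aux {q u v : ℝ} (hq : 1 ≤ q) (hu : 0 ≤ u) (hv : 0 ≤ v) :
    u ^ (1/q) + v ^ (1/q) ≤ 2 * ((u + v) / 2) ^ (1/q) := by
  have hq0 : 0 < q := lt_of_lt_of_le one_pos hq
  simp only [one_div]
  have hX : (0:ℝ) ≤ 2⁻¹ * u ^ q⁻¹ + 2⁻¹ * v ^ q⁻¹ := by positivity
  have key : (2⁻¹ * u ^ q⁻¹ + 2⁻¹ * v ^ q⁻¹) ^ q ≤ (u + v) / 2 := by
    have hc := convexOn_rpow hq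
    have h1 : u ^ q⁻¹ ∈ Set.Ici (0:ℝ) := Real.rpow_nonneg hu _
    have h2 : v ^ q⁻¹ ∈ Set.Ici (0:ℝ) := Real.rpow_nonneg hv _
    have h3 := hc.2 h1 h2 (by norm_num : (0:ℝ) ≤ 2⁻¹) (by norm_num : (0:ℝ) ≤ 2⁻¹)
      (by norm_num : (2⁻¹ : ℝ) + 2⁻¹ = 1)
    simp only [smul_eq_mul] at h3
    rw [Real.rpow_inv_rpow hu hq0.ne', Real.rpow_inv_rpow hv hq0.ne'] at h3
    linarith
  have h4 := Real.rpow_le_rpow (by positivity) key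
    (by positivity : (0:ℝ) ≤ q⁻¹)
  rw [Real.rpow_rpow_inv hX hq0.ne'] at h4
  linarith

theorem hermite_hadamard_first_deriv_abs_pow_convex
    (I : Set ℝ) (hI : I.OrdConnected) (f f' : ℝ → ℝ) (a b : ℝ)
    (ha : a ∈ interior I) (hb : b ∈ interior I) (hab : a < b)
    (hderiv : ∀ x ∈ interior I, HasDerivAt f (f' x) x)
    (hint : IntervalIntegrable f' volume a b)
    (q : ℝ) (hq : 1 ≤ q)
    (hconv : ConvexOn ℝ (Set.Icc a b) (fun x => |f' x| ^ q)) :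
    |(1 / (b - a)) * (∫ x in a..b, f x) - f ((a + b) / 2)| ≤
      (b - a) / 4 * ((|f' a| ^ q + |f' b| ^ q) / 2) ^ (1 / q) := by
  have hq0 : 0 < q := lt_of_lt_of_le one_pos hq
  have hba : (0:ℝ) < b - a := sub_pos.2 hab
  set m : ℝ := (a + b) / 2 with hm
  have ham : a ≤ m := by rw [hm]; linarith
  have hmb : m ≤ b := by rw [hm]; linarith
  -- [a,b] ⊆ interior I
  have hIcc : Set.Icc a b ⊆ interior I := hI.interior.out ha hb
  have hfc : ContinuousOn f (Set.Icc a b) := fun x hx =>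
    ((hderiv x (hIcc hx)).continuousAt).continuousWithinAt
  have hsub1 : Set.uIcc a m ⊆ Set.Icc a b := by
    rw [Set.uIcc_of_le ham]; exact Set.Icc_subset_Icc le_rfl hmb
  have hsub2 : Set.uIcc m b ⊆ Set.Icc a b := by
    rw [Set.uIcc_of_le hmb]; exact Set.Icc_subset_Icc ham le_rfl
  have hsub1' : Set.uIcc a m ⊆ Set.uIcc a b := by
    rw [Set.uIcc_of_le hab.le]; exact hsub1
  have hsub2' : Set.uIcc m b ⊆ Set.uIcc a b := by
    rw [Set.uIcc_of_le hab.le]; exact hsub2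
  have hint1 : IntervalIntegrable f' volume a m := hint.mono_set hsub1'
  have hint2 : IntervalIntegrable f' volume m b := hint.mono_set hsub2'
  have hfint1 : IntervalIntegrable f volume a m :=
    (hfc.mono hsub1).intervalIntegrable
  have hfint2 : IntervalIntegrable f volume m b :=
    (hfc.mono hsub2).intervalIntegrable
  -- integration by parts on both halves
  have E1 : ∫ x in a..m, (x - a) * f' x = (m - a) * f m - ∫ x in a..m, f x := by
    have := intervalIntegral.integral_mul_deriv_eq_deriv_mul
      (u := fun x => x - a) (v := f) (u' := fun _ => (1:ℝ)) (v' := f')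
      (fun x _ => (hasDerivAt_id x).sub_const a)
      (fun x hx => hderiv x (hIcc (hsub1 hx)))
      intervalIntegrable_const hint1
    simpa using this
  have E2 : ∫ x in m..b, (x - b) * f' x = (b - m) * f m - ∫ x in m..b, f x := by
    have := intervalIntegral.integral_mul_deriv_eq_deriv_mul
      (u := fun x => x - b) (v := f) (u' := fun _ => (1:ℝ)) (v' := f')
      (fun x _ => (hasDerivAt_id x).sub_const b)
      (fun x hx => hderiv x (hIcc (hsub2 hx)))
      intervalIntegrable_const hint2
    simp at this
    linarith [this]
  have hsplitf : (∫ x in a..b, f x) = (∫ x in a..m, f x) + ∫ x in m..b, f x :=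
    (intervalIntegral.integral_add_adjacent_intervals hfint1 hfint2).symm
  set S : ℝ := (∫ x in a..m, (x - a) * f' x) + ∫ x in m..b, (x - b) * f' x with hS
  have key : (1 / (b - a)) * (∫ x in a..b, f x) - f m = -(S / (b - a)) := by
    rw [hS, E1, E2, hsplitf]
    field_simp
    ring
  rw [key, abs_neg, abs_div, abs_of_pos hba]
  -- definitions
  set A : ℝ := |f' a| ^ q with hA
  set B : ℝ := |f' b| ^ q with hB
  have hAnn : 0 ≤ A := Real.rpow_nonneg (abs_nonneg _) _
  have hBnn : 0 ≤ B := Real.rpow_nonneg (abs_nonneg _) _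
  set L : ℝ → ℝ := fun x => ((b - x) / (b - a)) * A + ((x - a) / (b - a)) * B with hL
  set h : ℝ → ℝ := fun x => L x ^ (1/q) with hh
  set W : ℝ → ℝ := fun x => min (x - a) (b - x) with hW
  set C : ℝ := ((A + B) / 2) ^ (1/q) with hC
  have hLcont : Continuous L := by fun_prop
  have hhcont : Continuous h := by
    apply hLcont.rpow_const
    intro x; right; positivity
  have hWcont : Continuous W := by fun_prop
  have hLnn : ∀ x ∈ Set.Icc a b, 0 ≤ L x := by
    intro x hx
    have h1 : 0 ≤ (b - x) / (b - a) := by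
      apply div_nonneg _ hba.le; linarith [hx.2]
    have h2 : 0 ≤ (x - a) / (b - a) := by
      apply div_nonneg _ hba.le; linarith [hx.1]
    have := mul_nonneg h1 hAnn
    have := mul_nonneg h2 hBnn
    simp only [hL]; linarith
  -- pointwise bound |f' x| ≤ h x on [a,b]
  have hpt : ∀ x ∈ Set.Icc a b, |f' x| ≤ h x := by
    intro x hx
    have ht1 : 0 ≤ (b - x) / (b - a) := by
      apply div_nonneg _ hba.le; linarith [hx.2]
    have ht2 : 0 ≤ (x - a) / (b - a) := by
      apply div_nonneg _ hba.le; linarith [hx.1]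
    have hts : (b - x) / (b - a) + (x - a) / (b - a) = 1 := by
      field_simp; ring
    have hx' : ((b - x) / (b - a)) • a + ((x - a) / (b - a)) • b = x := by
      simp only [smul_eq_mul]; field_simp; ring
    have hcv := hconv.2 (Set.left_mem_Icc.2 hab.le) (Set.right_mem_Icc.2 hab.le)
      ht1 ht2 hts
    rw [hx'] at hcv
    simp only [smul_eq_mul] at hcv
    have hfq : |f' x| ^ q ≤ L x := hcv
    have : |f' x| = (|f' x| ^ q) ^ (1/q) := by
      rw [one_div, Real.rpow_rpow_inv (abs_nonneg _) hq0.ne']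
    rw [this]
    exact Real.rpow_le_rpow (Real.rpow_nonneg (abs_nonneg _) _) hfq (by positivity)
  -- bound each half integral
  have hWh_int1 : IntervalIntegrable (fun x => W x * h x) volume a m :=
    ((hWcont.mul hhcont).continuousOn).intervalIntegrable
  have hWh_int2 : IntervalIntegrable (fun x => W x * h x) volume m b :=
    ((hWcont.mul hhcont).continuousOn).intervalIntegrable
  have bound1 : |∫ x in a..m, (x - a) * f' x| ≤ ∫ x in a..m, W x * h x := by
    calc |∫ x in a..m, (x - a) * f' x| ≤ ∫ x in a..m, |(x - a) * f' x| :=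
          intervalIntegral.abs_integral_le_integral_abs ham
      _ ≤ ∫ x in a..m, W x * h x := by
          apply intervalIntegral.integral_mono_on ham _ hWh_int1
          · intro x hx
            have hxab : x ∈ Set.Icc a b := ⟨hx.1, le_trans hx.2 hmb⟩
            have hxa : 0 ≤ x - a := by linarith [hx.1]
            have hWx : W x = x - a := by
              rw [hW]; apply min_eq_left
              rw [hm] at hx; linarith [hx.2]
            rw [abs_mul, abs_of_nonneg hxa, hWx]
            exact mul_le_mul_of_nonneg_left (hpt x hxab) hxa
          · exact ((hint1.continuousOn_mul (continuous_id.sub continuous_const).continuousOn).abs)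
  have bound2 : |∫ x in m..b, (x - b) * f' x| ≤ ∫ x in m..b, W x * h x := by
    calc |∫ x in m..b, (x - b) * f' x| ≤ ∫ x in m..b, |(x - b) * f' x| :=
          intervalIntegral.abs_integral_le_integral_abs hmb
      _ ≤ ∫ x in m..b, W x * h x := by
          apply intervalIntegral.integral_mono_on hmb _ hWh_int2
          · intro x hx
            have hxab : x ∈ Set.Icc a b := ⟨le_trans ham hx.1, hx.2⟩
            have hxb : 0 ≤ b - x := by linarith [hx.2]
            have hWx : W x = b - x := by
              rw [hW]; apply min_eq_right
              rw [hm] at hx; linarith [hx.1]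
            rw [abs_mul, abs_sub_comm, abs_of_nonneg hxb, hWx]
            exact mul_le_mul_of_nonneg_left (hpt x hxab) hxb
          · exact ((hint2.continuousOn_mul (continuous_id.sub continuous_const).continuousOn).abs)
  have hScomb : |S| ≤ ∫ x in a..b, W x * h x := by
    have := (intervalIntegral.integral_add_adjacent_intervals hWh_int1 hWh_int2)
    calc |S| ≤ |∫ x in a..m, (x - a) * f' x| + |∫ x in m..b, (x - b) * f' x| :=
          abs_add_le _ _
      _ ≤ (∫ x in a..m, W x * h x) + ∫ x in m..b, W x * h x := add_le_add bound1 bound2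
      _ = ∫ x in a..b, W x * h x := this
  -- symmetry of W
  have hWsym : ∀ y, W (a + b - y) = W y := by
    intro y
    simp only [hW]
    rw [show a + b - y - a = b - y by ring, show b - (a + b - y) = y - a by ring, min_comm]
  -- symmetrization
  have hsym : (∫ x in a..b, W x * h x) = ∫ x in a..b, W x * h (a + b - x) := by
    have hcs := intervalIntegral.integral_comp_sub_left (a := a) (b := b)
      (fun y => W (a + b - y) * h y) (a + b)
    simp only [show a + b - b = a by ring, show a + b - a = b by ring] at hcs
    calc (∫ x in a..b, W x * h x) = ∫ y in a..b, W (a + b - y) * h y := by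
          apply intervalIntegral.integral_congr
          intro y _
          show W y * h y = W (a + b - y) * h y
          rw [hWsym]
      _ = ∫ x in a..b, W (a + b - (a + b - x)) * h (a + b - x) := hcs.symm
      _ = ∫ x in a..b, W x * h (a + b - x) := by
          apply intervalIntegral.integral_congr
          intro x _
          show W (a + b - (a + b - x)) * h (a + b - x) = W x * h (a + b - x)
          rw [show a + b - (a + b - x) = x by ring]
  have hCnn : 0 ≤ C := Real.rpow_nonneg (by positivity) _
  -- ∫ W = (b-a)^2/4
  have hWint : (∫ x in a..b, W x) = (b - a)^2 / 4 := by
    have i1 : (∫ x in a..m, W x) = (∫ x in a..m, (x - a)) := by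
      apply intervalIntegral.integral_congr
      intro x hx
      rw [Set.uIcc_of_le ham] at hx
      rw [hW]
      apply min_eq_left
      have h2 := hx.2
      rw [hm] at h2
      linarith
    have i2 : (∫ x in m..b, W x) = (∫ x in m..b, (b - x)) := by
      apply intervalIntegral.integral_congr
      intro x hx
      rw [Set.uIcc_of_le hmb] at hx
      rw [hW]
      apply min_eq_right
      have h1 := hx.1
      rw [hm] at h1
      linarith
    have c1 : (∫ x in a..m, (x - a)) = (m - a)^2 / 2 := by
      have h0 := intervalIntegral.integral_comp_sub_right (a := a) (b := m)
        (fun x => x) a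
      rw [integral_id] at h0
      rw [h0]
      ring
    have c2 : (∫ x in m..b, (b - x)) = (b - m)^2 / 2 := by
      have h0 := intervalIntegral.integral_comp_sub_left (a := m) (b := b)
        (fun x => x) b
      rw [integral_id] at h0
      rw [h0]
      ring
    have hadd : (∫ x in a..b, W x) = (∫ x in a..m, W x) + ∫ x in m..b, W x :=
      (intervalIntegral.integral_add_adjacent_intervals
        (hWcont.continuousOn.intervalIntegrable)
        (hWcont.continuousOn.intervalIntegrable)).symm
    rw [hadd, i1, i2, c1, c2, hm]
    ring
  -- h x + h(a+b-x) ≤ 2C on [a,b]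
  have hsum : ∀ x ∈ Set.Icc a b, h x + h (a + b - x) ≤ 2 * C := by
    intro x hx
    have hx' : a + b - x ∈ Set.Icc a b := ⟨by linarith [hx.2], by linarith [hx.1]⟩
    have hLsum : L x + L (a + b - x) = A + B := by
      simp only [hL]
      field_simp
      ring
    have := two_point_power_mean_aux hq (hLnn x hx) (hLnn _ hx')
    rw [hLsum] at this
    exact this
  -- main integral bound
  have hmain : (∫ x in a..b, W x * h x) ≤ C * ((b - a)^2 / 4) := by
    have hint_sym : IntervalIntegrable (fun x => W x * h (a + b - x)) volume a b :=
      ((hWcont.mul (hhcont.comp (continuous_const.sub continuous_id))).continuousOn).intervalIntegrable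
    have hint_Wh : IntervalIntegrable (fun x => W x * h x) volume a b :=
      ((hWcont.mul hhcont).continuousOn).intervalIntegrable
    have step : (∫ x in a..b, (W x * h x + W x * h (a + b - x))) ≤
        ∫ x in a..b, W x * (2 * C) := by
      apply intervalIntegral.integral_mono_on hab.le (hint_Wh.add hint_sym)
        ((hWcont.mul continuous_const).continuousOn.intervalIntegrable)
      intro x hx
      have hWnn : 0 ≤ W x := by
        simp only [hW]
        rcases hx with ⟨h1, h2⟩
        apply le_min <;> linarith
      rw [← mul_add]
      exact mul_le_mul_of_nonneg_left (hsum x hx) hWnn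
    rw [intervalIntegral.integral_add hint_Wh hint_sym, ← hsym] at step
    have : (∫ x in a..b, W x * (2 * C)) = 2 * C * ((b - a)^2 / 4) := by
      have : (∫ x in a..b, W x * (2 * C)) = (∫ x in a..b, W x) * (2 * C) :=
        intervalIntegral.integral_mul_const _ _
      rw [this, hWint]; ring
    rw [this] at step
    linarith
  -- conclude
  have final : |S| ≤ C * ((b - a)^2 / 4) := le_trans hScomb hmain
  rw [div_le_iff₀ hba]
  calc |S| ≤ C * ((b - a)^2 / 4) := final
    _ = (b - a) / 4 * C * (b - a) := by ring
end
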